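/- If (a_n) is a strongly non density lifting invariant (strongly non dli) arithmetic sequence, then the statistically characterized subgroup t^s_{(d_n)}(T) is countable. -/

import Mathlib

open Filter Topology Set

noncomputable section

/-- The sequence of ratios `b n = a n / a (n-1)` of an arithmetic sequence. -/
def ratios (a : ℕ → ℕ) (n : ℕ) : ℕ := a n / a (n - 1)

/-- An arithmetic sequence: `a 0 = 1`, strictly increasing, each term divides the next. -/
def IsArithSeq (a : ℕ → ℕ) : Prop :=
  a 0 = 1 ∧ (∀ n, a n < a (n + 1)) ∧ (∀ n, a n ∣ a (n + 1))

/-- The indices `n_k` with `a k = d (n k)`: `n 0 = 1`, `n (k+1) = n k + (b (k+1) - 1)`. -/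
def nseq (a : ℕ → ℕ) : ℕ → ℕ
  | 0 => 1
  | k + 1 => nseq a k + (ratios a (k + 1) - 1)

/-- The lifting function `L(A) = ⋃_{k ∈ A} [n_{k-1}, n_k - 1]`. -/
def liftSet (a : ℕ → ℕ) (A : Set ℕ) : Set ℕ :=
  ⋃ k ∈ A, Set.Icc (nseq a (k - 1)) (nseq a k - 1)

/-- `A ⊆ ℕ` has natural density `δ`. -/
def HasDensity (A : Set ℕ) (δ : ℝ) : Prop :=
  Tendsto (fun n : ℕ => ((A ∩ Set.Iio n).ncard : ℝ) / n) atTop (𝓝 δ)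

/-- The upper natural density of `A ⊆ ℕ`. -/
def upperDensity (A : Set ℕ) : ℝ :=
  limsup (fun n : ℕ => ((A ∩ Set.Iio n).ncard : ℝ) / n) atTop

/-- The sequence `(d n)`: the increasing enumeration of `{r * a k : k ≥ 0, 1 ≤ r < b (k+1)}`. -/
def dSeq (a : ℕ → ℕ) : ℕ → ℕ :=
  Nat.nth (fun m => ∃ k r : ℕ, 1 ≤ r ∧ r < ratios a (k + 1) ∧ m = r * a k)

/-- The characterized subgroup `t_{(u n)}(𝕋)`. -/
def charSub (u : ℕ → ℤ) : Set (AddCircle (1 : ℝ)) :=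
  {x | Tendsto (fun n => u n • x) atTop (𝓝 0)}

/-- The statistically characterized subgroup `t^s_{(u n)}(𝕋)`. -/
def statChar (u : ℕ → ℤ) : Set (AddCircle (1 : ℝ)) :=
  {x | ∀ ε : ℝ, 0 < ε → HasDensity {n : ℕ | ε ≤ ‖u n • x‖} 0}

/-- Density lifting invariant. -/
def Dli (a : ℕ → ℕ) : Prop :=
  ∀ A : Set ℕ, A.Infinite → HasDensity A 0 → HasDensity (liftSet a A) 0

/-- Weakly density lifting invariant. -/
def WeaklyDli (a : ℕ → ℕ) : Prop :=
  ∃ A : Set ℕ, A.Infinite ∧ ∀ m : ℕ, HasDensity (liftSet a ((fun x => x - m) '' A)) 0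

/-- Strongly non density lifting invariant. -/
def StronglyNonDli (a : ℕ → ℕ) : Prop :=
  ∀ A : Set ℕ, A.Infinite → 0 < upperDensity (liftSet a A)

-- distance-to-integers helper lemmas
lemma dz_add_int (x : ℝ) (z : ℤ) : |x + z - round (x + z)| = |x - round x| := by
  rw [round_add_intCast]; push_cast; congr 1; ring

lemma dz_neg (x : ℝ) : |(-x) - round (-x)| = |x - round x| := by
  have key : ∀ u : ℝ, |(-u) - round (-u)| ≤ |u - round u| := by
    intro u
    have h := round_le (-u) (-(round u))
    calc |(-u) - round (-u)| ≤ |(-u) - ((-(round u) : ℤ) : ℝ)| := h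
      _ = |u - round u| := by push_cast; rw [← abs_neg]; congr 1; ring
  refine le_antisymm (key x) ?_
  have := key (-x); rwa [neg_neg] at this

lemma dz_sub_le (x y : ℝ) : |x - y - round (x - y)| ≤ |x - round x| + |y - round y| := by
  have h := round_le (x - y) (round x - round y)
  calc |x - y - round (x - y)| ≤ |x - y - ((round x - round y : ℤ) : ℝ)| := h
    _ = |(x - round x) - (y - round y)| := by push_cast; congr 1; ring
    _ ≤ |x - round x| + |y - round y| := abs_sub _ _

lemma dz_self {δ : ℝ} (h0 : 0 ≤ δ) (h2 : δ ≤ 1/2) : |δ - round δ| = δ := by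
  rcases lt_or_eq_of_le h2 with h | h
  · rw [round_eq_zero_iff.mpr ⟨by linarith, by simpa using h⟩]; simp [abs_of_nonneg h0]
  · rw [h]
    have : round ((1:ℝ)/2) = 1 := by rw [one_div, round_two_inv]
    rw [this]; norm_num


/-- Key counting lemma: if `‖t‖ ≥ 1/(2b)` then at least `(b-1)/20` of the multiples
`r*t`, `r ∈ [2,b]`, are at distance `≥ 1/40` from the integers. -/
lemma badCount (b : ℕ) (hb : 3 ≤ b) (t : ℝ) (ht : 1/(2*(b:ℝ)) ≤ |t - round t|) :
    ((b:ℝ) - 1)/20 ≤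
      (((Finset.Icc 2 b).filter
        (fun r : ℕ => (1/40:ℝ) ≤ |(r:ℝ)*t - round ((r:ℝ)*t)|)).card : ℝ) := by
  classical
  set δ : ℝ := |t - round t| with hδdef
  have hδ0 : 0 ≤ δ := abs_nonneg _
  have hδhalf : δ ≤ 1/2 := abs_sub_round t
  have hbR : (3:ℝ) ≤ (b:ℝ) := by exact_mod_cast hb
  have hb0 : (0:ℝ) < b := by linarith
  have hδpos : 0 < δ := lt_of_lt_of_le (by positivity) ht
  -- replace t by δ
  have hkey : ∀ r : ℕ, |(r:ℝ)*t - round ((r:ℝ)*t)| = |(r:ℝ)*δ - round ((r:ℝ)*δ)| := by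
    intro r
    have h1 : (r:ℝ)*t = (r:ℝ)*(t - round t) + ((r * round t : ℤ):ℝ) := by push_cast; ring
    have h2 : |(r:ℝ)*t - round ((r:ℝ)*t)|
        = |(r:ℝ)*(t-round t) - round ((r:ℝ)*(t-round t))| := by
      rw [h1, dz_add_int]
    rcases abs_cases (t - round t) with ⟨he, _⟩ | ⟨he, _⟩
    · rw [h2, hδdef, he]
    · rw [h2, hδdef, he]
      have : (r:ℝ) * -(t - round t) = -((r:ℝ)*(t - round t)) := by ring
      rw [this, dz_neg]
  have hfc : (Finset.Icc 2 b).filter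
        (fun r : ℕ => (1/40:ℝ) ≤ |(r:ℝ)*t - round ((r:ℝ)*t)|)
      = (Finset.Icc 2 b).filter
        (fun r : ℕ => (1/40:ℝ) ≤ |(r:ℝ)*δ - round ((r:ℝ)*δ)|) := by
    apply Finset.filter_congr; intro r _; rw [hkey r]
  rw [hfc]
  set bad := (Finset.Icc 2 b).filter
      (fun r : ℕ => (1/40:ℝ) ≤ |(r:ℝ)*δ - round ((r:ℝ)*δ)|) with hbad
  by_cases hc : (1/20:ℝ) ≤ δ
  · -- no two consecutive good: pair argument
    have hpair : ∀ j : ℕ, 1 ≤ j → 2*j+1 ≤ b → (2*j ∈ bad ∨ 2*j+1 ∈ bad) := by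
      intro j hj1 hjb
      by_contra hcon
      push_neg at hcon
      obtain ⟨hA, hB⟩ := hcon
      have hmem1 : (2*j) ∈ Finset.Icc 2 b := by
        rw [Finset.mem_Icc]; omega
      have hmem2 : (2*j+1) ∈ Finset.Icc 2 b := by
        rw [Finset.mem_Icc]; omega
      have hg1 : |((2*j:ℕ):ℝ)*δ - round (((2*j:ℕ):ℝ)*δ)| < 1/40 := by
        by_contra hx; push_neg at hx
        exact hA (Finset.mem_filter.mpr ⟨hmem1, hx⟩)
      have hg2 : |((2*j+1:ℕ):ℝ)*δ - round (((2*j+1:ℕ):ℝ)*δ)| < 1/40 := by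
        by_contra hx; push_neg at hx
        exact hB (Finset.mem_filter.mpr ⟨hmem2, hx⟩)
      have hdd : ((2*j+1:ℕ):ℝ)*δ - ((2*j:ℕ):ℝ)*δ = δ := by push_cast; ring
      have := dz_sub_le (((2*j+1:ℕ):ℝ)*δ) (((2*j:ℕ):ℝ)*δ)
      rw [hdd, dz_self hδ0 hδhalf] at this
      linarith
    set f : ℕ → ℕ := fun j => if 2*j ∈ bad then 2*j else 2*j+1 with hf
    have hmaps : ∀ j ∈ Finset.Icc 1 ((b-1)/2), f j ∈ bad := by
      intro j hj
      rw [Finset.mem_Icc] at hj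
      have h2j : 2*j+1 ≤ b := by
        have := hj.2
        have h1 : j * 2 ≤ b - 1 := by
          rw [← Nat.le_div_iff_mul_le (by norm_num)]; exact this
        omega
      rcases hpair j hj.1 h2j with h | h
      · simp only [hf]; rw [if_pos h]; exact h
      · simp only [hf]
        by_cases h' : 2*j ∈ bad
        · rw [if_pos h']; exact h'
        · rw [if_neg h']; exact h
    have hinj : Set.InjOn f (Finset.Icc 1 ((b-1)/2)) := by
      intro j _ j' _ hjj
      simp only [hf] at hjj
      split_ifs at hjj <;> omega
    have hcard : (b-1)/2 ≤ bad.card := by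
      have := Finset.card_le_card_of_injOn f hmaps hinj
      simpa using this
    have hn : b - 2 ≤ 2 * ((b-1)/2) := by omega
    have hcast : ((b:ℝ) - 2) ≤ 2 * (((b-1)/2 : ℕ) : ℝ) := by
      have := (Nat.cast_le (α := ℝ)).2 hn
      push_cast at this
      rw [Nat.cast_sub (by omega : 2 ≤ b)] at this
      · push_cast at this ⊢; linarith
    have hcast2 : (((b-1)/2 : ℕ) : ℝ) ≤ (bad.card : ℝ) := by exact_mod_cast hcard
    linarith
  · -- δ small case: counting via round values
    push_neg at hc
    have hb11 : (10:ℝ) < b := by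
      have h1 : 1/(2*(b:ℝ)) < 1/20 := lt_of_le_of_lt ht hc
      rw [div_lt_div_iff₀ (by linarith) (by norm_num)] at h1
      linarith
    set good := (Finset.Icc 2 b).filter
        (fun r : ℕ => ¬ ((1/40:ℝ) ≤ |(r:ℝ)*δ - round ((r:ℝ)*δ)|)) with hgood
    have hsplit : bad.card + good.card = b - 1 := by
      rw [hbad, hgood]
      have := Finset.card_filter_add_card_filter_not
        (s := Finset.Icc 2 b)
        (p := fun r : ℕ => (1/40:ℝ) ≤ |(r:ℝ)*δ - round ((r:ℝ)*δ)|)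
      rw [Nat.card_Icc] at this
      omega
    -- bound good
    set F : ℕ := ⌊(1/20)/δ⌋₊ with hF
    set M : ℤ := ⌊(b:ℝ)*δ + 1/2⌋ with hM
    have hM0 : 0 ≤ M := by
      rw [hM]; apply Int.floor_nonneg.mpr; positivity
    have hfiber : ∀ m ∈ good.image (fun r : ℕ => round ((r:ℝ)*δ)),
        (good.filter (fun r : ℕ => round ((r:ℝ)*δ) = m)).card ≤ F + 1 := by
      intro m _
      set s := good.filter (fun r : ℕ => round ((r:ℝ)*δ) = m) with hs
      rcases s.eq_empty_or_nonempty with he | hne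
      · rw [he]; simp
      have hsub : s ⊆ Finset.Icc (s.min' hne) (s.min' hne + F) := by
        intro r hr
        rw [Finset.mem_Icc]
        refine ⟨Finset.min'_le s r hr, ?_⟩
        set r0 := s.min' hne with hr0
        have hr0s : r0 ∈ s := Finset.min'_mem s hne
        have hget : ∀ u : ℕ, u ∈ s → |(u:ℝ)*δ - m| < 1/40 := by
          intro u hu
          rw [hs, Finset.mem_filter] at hu
          obtain ⟨hu1, hu2⟩ := hu
          rw [hgood, Finset.mem_filter] at hu1
          push_neg at hu1
          have := hu1.2
          rw [← hu2]; exact this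
        have h1 := hget r hr
        have h2 := hget r0 hr0s
        have hle : r0 ≤ r := Finset.min'_le s r hr
        have hd : ((r - r0 : ℕ) : ℝ) * δ < 1/20 := by
          have : ((r - r0 : ℕ) : ℝ) = (r:ℝ) - r0 := by
            push_cast [Nat.cast_sub hle]; ring
          rw [this]
          have habs : |((r:ℝ) - r0)*δ| < 1/20 := by
            have : ((r:ℝ) - r0)*δ = ((r:ℝ)*δ - m) - ((r0:ℝ)*δ - m) := by ring
            rw [this]
            calc |((r:ℝ)*δ - m) - ((r0:ℝ)*δ - m)| ≤ |(r:ℝ)*δ - m| + |(r0:ℝ)*δ - m| :=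
              abs_sub _ _
              _ < 1/20 := by linarith
          have hnn : 0 ≤ ((r:ℝ) - r0)*δ := by
            apply mul_nonneg _ hδ0
            · have : (r0:ℝ) ≤ r := by exact_mod_cast hle
              linarith
          calc ((r:ℝ) - r0)*δ ≤ |((r:ℝ) - r0)*δ| := le_abs_self _
            _ < 1/20 := habs
        have : (r - r0 : ℕ) ≤ F := by
          rw [hF]
          apply Nat.le_floor
          rw [le_div_iff₀ hδpos]
          exact le_of_lt hd
        omega
      calc s.card ≤ (Finset.Icc (s.min' hne) (s.min' hne + F)).card :=
          Finset.card_le_card hsub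
        _ = F + 1 := by rw [Nat.card_Icc]; omega
    have himg : good.image (fun r : ℕ => round ((r:ℝ)*δ)) ⊆ Finset.Icc (0:ℤ) M := by
      intro m hm
      rw [Finset.mem_image] at hm
      obtain ⟨r, hr, rfl⟩ := hm
      rw [hgood, Finset.mem_filter, Finset.mem_Icc] at hr
      have hrb : (r:ℝ) ≤ b := by exact_mod_cast hr.1.2
      have hr0 : (0:ℝ) ≤ r := by positivity
      rw [Finset.mem_Icc]
      constructor
      · rw [round_eq]; apply Int.floor_nonneg.mpr; positivity
      · rw [hM, round_eq]
        apply Int.floor_le_floor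
        nlinarith
    have hgoodcard : (good.card : ℝ) ≤ ((1/20)/δ + 1) * ((b:ℝ)*δ + 3/2) := by
      have h1 : good.card ≤ (F + 1) * (good.image (fun r : ℕ => round ((r:ℝ)*δ))).card :=
        Finset.card_le_mul_card_image good (F+1) hfiber
      have h2 : (good.image (fun r : ℕ => round ((r:ℝ)*δ))).card ≤ (Finset.Icc (0:ℤ) M).card :=
        Finset.card_le_card himg
      have h3 : ((Finset.Icc (0:ℤ) M).card : ℝ) ≤ (b:ℝ)*δ + 3/2 := by
        have hcard : ((Finset.Icc (0:ℤ) M).card : ℤ) = M + 1 := by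
          rw [Int.card_Icc]; omega
        have hc2 : ((Finset.Icc (0:ℤ) M).card : ℝ) = (M:ℝ) + 1 := by exact_mod_cast hcard
        have : (M:ℝ) ≤ (b:ℝ)*δ + 1/2 := Int.floor_le _
        rw [hc2]; linarith
      have h4 : ((F:ℝ) + 1) ≤ (1/20)/δ + 1 := by
        have : (F:ℝ) ≤ (1/20)/δ := Nat.floor_le (by positivity)
        linarith
      have h1' : (good.card : ℝ) ≤ ((F:ℝ)+1) * ((Finset.Icc (0:ℤ) M).card : ℝ) := by
        have hh := le_trans h1 (Nat.mul_le_mul_left (F+1) h2)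
        exact_mod_cast hh
      calc (good.card : ℝ) ≤ ((F:ℝ)+1) * ((Finset.Icc (0:ℤ) M).card : ℝ) := h1'
        _ ≤ ((1/20)/δ + 1) * ((b:ℝ)*δ + 3/2) := by
            apply mul_le_mul h4 h3 (Nat.cast_nonneg _) (by positivity)
    have hexp : ((1/20)/δ + 1) * ((b:ℝ)*δ + 3/2) = (b:ℝ)/20 + (3/40)/δ + (b:ℝ)*δ + 3/2 := by
      field_simp; ring
    have hinv : (3/40)/δ ≤ (3/20)*(b:ℝ) := by
      rw [div_le_iff₀ hδpos]
      have h1 : 1 ≤ 2*(b:ℝ)*δ := by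
        rw [div_le_iff₀ (by linarith : (0:ℝ) < 2*(b:ℝ))] at ht
        linarith
      nlinarith
    have hbδ : (b:ℝ)*δ ≤ (b:ℝ)/20 := by nlinarith
    have hgood2 : (good.card : ℝ) ≤ (b:ℝ)/4 + 3/2 := by
      rw [hexp] at hgoodcard
      linarith
    have hbadcast : (bad.card : ℝ) = ((b:ℝ) - 1) - good.card := by
      have : ((bad.card + good.card : ℕ) : ℝ) = ((b - 1 : ℕ) : ℝ) := by rw [hsplit]
      push_cast at this
      rw [Nat.cast_sub (by omega : 1 ≤ b)] at this
      push_cast at this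
      linarith
    rw [hbadcast]
    linarith

section Arith
variable {a : ℕ → ℕ}

lemma a_strictMono (ha : IsArithSeq a) : StrictMono a := strictMono_nat_of_lt_succ ha.2.1

lemma a_pos (ha : IsArithSeq a) (k : ℕ) : 1 ≤ a k := by
  have := (a_strictMono ha).monotone (Nat.zero_le k)
  rw [ha.1] at this
  omega

lemma ratios_mul (ha : IsArithSeq a) (k : ℕ) : a (k+1) = ratios a (k+1) * a k := by
  have h : ratios a (k+1) = a (k+1) / a k := by simp [ratios]
  rw [h, Nat.div_mul_cancel (ha.2.2 k)]

lemma ratios_two_le (ha : IsArithSeq a) (k : ℕ) : 2 ≤ ratios a (k+1) := by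
  have h1 := ratios_mul ha k
  have h2 := ha.2.1 k
  have h3 := a_pos ha k
  rcases Nat.lt_or_ge (ratios a (k+1)) 2 with h | h
  · interval_cases (ratios a (k+1)) <;> omega
  · exact h

lemma nseq_succ (k : ℕ) : nseq a (k+1) = nseq a k + (ratios a (k+1) - 1) := rfl

lemma nseq_zero : nseq a 0 = 1 := rfl

lemma nseq_strictMono (ha : IsArithSeq a) : StrictMono (nseq a) := by
  apply strictMono_nat_of_lt_succ
  intro k
  have := ratios_two_le ha k
  rw [nseq_succ]; omega

lemma nseq_ge (ha : IsArithSeq a) (k : ℕ) : k + 1 ≤ nseq a k := by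
  induction k with
  | zero => simp [nseq_zero]
  | succ k ih =>
    have := ratios_two_le ha k
    rw [nseq_succ]; omega

/-- the block index of `n`: unique `k ≥ 1` with `nseq (k-1) ≤ n < nseq k` (for `n ≥ 1`). -/
def blk (a : ℕ → ℕ) (n : ℕ) : ℕ := sInf {k | n < nseq a k}

lemma blk_spec (ha : IsArithSeq a) {n : ℕ} (hn : 1 ≤ n) :
    nseq a (blk a n - 1) ≤ n ∧ n < nseq a (blk a n) ∧ 1 ≤ blk a n := by
  have hne : {k | n < nseq a k}.Nonempty := ⟨n, by have := nseq_ge ha n; simp; omega⟩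
  have hmem : n < nseq a (blk a n) := Nat.sInf_mem hne
  have h1 : 1 ≤ blk a n := by
    by_contra h
    push_neg at h
    interval_cases (blk a n)
    · rw [nseq_zero] at hmem; omega
  refine ⟨?_, hmem, h1⟩
  by_contra h
  push_neg at h
  have hmem2 : blk a n - 1 ∈ {k | n < nseq a k} := h
  have h3 : blk a n ≤ blk a n - 1 := Nat.sInf_le hmem2
  omega

lemma blk_eq (ha : IsArithSeq a) {n k : ℕ} (hk : 1 ≤ k)
    (h1 : nseq a (k-1) ≤ n) (h2 : n < nseq a k) : blk a n = k := by
  apply le_antisymm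
  · exact Nat.sInf_le h2
  · by_contra h
    push_neg at h
    have hle : blk a n ≤ k - 1 := by omega
    have hmono := (nseq_strictMono ha).monotone hle
    have hn1 : 1 ≤ n := by
      have := nseq_ge ha (k-1); omega
    have := (blk_spec ha hn1).2.1
    omega

/-- explicit form of the enumeration of the `d`-set. -/
def Df (a : ℕ → ℕ) (n : ℕ) : ℕ :=
  if n = 0 then 1 else (n - nseq a (blk a n - 1) + 2) * a (blk a n - 1)

lemma Df_strictMono (ha : IsArithSeq a) : StrictMono (Df a) := by
  apply strictMono_nat_of_lt_succ
  intro n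
  rcases Nat.eq_zero_or_pos n with rfl | hn
  · -- Df 0 = 1 < Df 1 = 2
    have hblk : blk a 1 = 1 := by
      apply blk_eq ha le_rfl
      · simp [nseq_zero]
      · rw [nseq_succ, nseq_zero]
        have := ratios_two_le ha 0
        omega
    simp only [Df, if_pos rfl, if_neg one_ne_zero, hblk]
    simp [nseq_zero, ha.1]
  · obtain ⟨hlo, hhi, hk1⟩ := blk_spec ha hn
    obtain ⟨j, hj⟩ : ∃ j, blk a n = j + 1 := ⟨blk a n - 1, by omega⟩
    rw [hj] at hlo hhi
    simp only [show j + 1 - 1 = j by omega] at hlo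
    rcases Nat.lt_or_ge (n+1) (nseq a (j+1)) with hlt | hge
    · -- same block
      have hblk : blk a (n+1) = j + 1 := by
        apply blk_eq ha (by omega)
        · simp only [show j + 1 - 1 = j by omega]; omega
        · exact hlt
      have hne1 : n + 1 ≠ 0 := by omega
      simp only [Df, if_neg (by omega : n ≠ 0), if_neg hne1, hblk, hj,
        show j + 1 - 1 = j by omega]
      have harith : n + 1 - nseq a j + 2 = (n - nseq a j + 2) + 1 := by omega
      rw [harith, add_one_mul]
      have := a_pos ha j
      omega
    · -- next block: n+1 = nseq a (j+1)
      have heq : n + 1 = nseq a (j+1) := by omega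
      have hb2 := ratios_two_le ha j
      have hb2' := ratios_two_le ha (j+1)
      have hblk : blk a (n+1) = j + 2 := by
        apply blk_eq ha (by omega)
        · simp only [show j + 2 - 1 = j + 1 by omega]; omega
        · rw [nseq_succ (j+1)]; omega
      have hne1 : n + 1 ≠ 0 := by omega
      simp only [Df, if_neg (by omega : n ≠ 0), if_neg hne1, hblk, hj,
        show j + 2 - 1 = j + 1 by omega, show j + 1 - 1 = j by omega]
      have h1 : n + 1 - nseq a (j + 1) + 2 = 2 := by omega
      rw [h1]
      have h2 : n - nseq a j + 2 = ratios a (j+1) := by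
        rw [nseq_succ] at heq
        omega
      rw [h2, ← ratios_mul ha j]
      have := a_pos ha (j+1)
      omega

lemma Df_range (ha : IsArithSeq a) :
    Set.range (Df a) = {m | ∃ k r : ℕ, 1 ≤ r ∧ r < ratios a (k + 1) ∧ m = r * a k} := by
  ext m
  constructor
  · rintro ⟨n, rfl⟩
    rcases Nat.eq_zero_or_pos n with rfl | hn
    · refine ⟨0, 1, le_rfl, ?_, ?_⟩
      · have := ratios_two_le ha 0; omega
      · simp [Df, ha.1]
    · obtain ⟨hlo, hhi, hk1⟩ := blk_spec ha hn
      obtain ⟨j, hj⟩ : ∃ j, blk a n = j + 1 := ⟨blk a n - 1, by omega⟩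
      rw [hj] at hlo hhi
      simp only [show j + 1 - 1 = j by omega] at hlo
      have hb2 := ratios_two_le ha j
      simp only [Df, if_neg (by omega : n ≠ 0), hj, show j + 1 - 1 = j by omega]
      have hrub : n - nseq a j + 2 ≤ ratios a (j+1) := by
        rw [nseq_succ] at hhi
        omega
      rcases Nat.lt_or_ge (n - nseq a j + 2) (ratios a (j+1)) with hrb | hrb
      · exact ⟨j, n - nseq a j + 2, by omega, hrb, rfl⟩
      · have hreq : n - nseq a j + 2 = ratios a (j+1) := by omega
        refine ⟨j+1, 1, le_rfl, ?_, ?_⟩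
        · have := ratios_two_le ha (j+1); omega
        · rw [hreq, one_mul, ← ratios_mul ha j]
  · rintro ⟨k, r, hr1, hrb, rfl⟩
    have hb2 := ratios_two_le ha k
    rcases Nat.lt_or_ge r 2 with hr2 | hr2
    · -- r = 1 : value a k
      have hreq : r = 1 := by omega
      subst hreq
      rcases Nat.eq_zero_or_pos k with rfl | hk
      · exact ⟨0, by simp [Df, ha.1]⟩
      · obtain ⟨j, rfl⟩ : ∃ j, k = j + 1 := ⟨k - 1, by omega⟩
        refine ⟨nseq a (j+1) - 1, ?_⟩
        have hb2' := ratios_two_le ha j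
        have hge := nseq_ge ha (j+1)
        have hlt : nseq a j ≤ nseq a (j+1) - 1 := by
          rw [nseq_succ]; omega
        have hblk : blk a (nseq a (j+1) - 1) = j + 1 := by
          apply blk_eq ha (by omega)
          · simp only [show j + 1 - 1 = j by omega]; exact hlt
          · omega
        simp only [Df, if_neg (by omega : nseq a (j+1) - 1 ≠ 0), hblk,
          show j + 1 - 1 = j by omega]
        rw [nseq_succ]
        have h1 : nseq a j + (ratios a (j+1) - 1) - 1 - nseq a j + 2 = ratios a (j+1) := by
          omega
        rw [h1, ← ratios_mul ha j, one_mul]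
    · -- r ≥ 2 : inside block k+1
      refine ⟨nseq a k + (r - 2), ?_⟩
      have hge := nseq_ge ha k
      have hblk : blk a (nseq a k + (r - 2)) = k + 1 := by
        apply blk_eq ha (by omega)
        · simp only [show k + 1 - 1 = k by omega]; omega
        · rw [nseq_succ]; omega
      simp only [Df, if_neg (by omega : nseq a k + (r - 2) ≠ 0), hblk,
        show k + 1 - 1 = k by omega]
      congr 1
      omega

lemma strictMono_nat_range_eq {f g : ℕ → ℕ} (hf : StrictMono f) (hg : StrictMono g)
    (h : Set.range f = Set.range g) : f = g := by
  have key : ∀ f g : ℕ → ℕ, StrictMono f → StrictMono g → Set.range f = Set.range g →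
      ∀ n, (∀ m, m < n → f m = g m) → f n ≤ g n := by
    intro f g hf hg h n ih
    have : g n ∈ Set.range f := by rw [h]; exact Set.mem_range_self n
    obtain ⟨m, hm⟩ := this
    rcases Nat.lt_or_ge m n with hmn | hmn
    · exfalso
      have : f m = g m := ih m hmn
      rw [this] at hm
      have := hg.injective hm
      omega
    · calc f n ≤ f m := hf.monotone hmn
        _ = g n := hm
  funext n
  induction n using Nat.strong_induction_on with
  | _ n ih =>
    exact le_antisymm (key f g hf hg h n ih)
      (key g f hg hf h.symm n fun m hm => (ih m hm).symm)

lemma dSeq_eq_Df (ha : IsArithSeq a) : dSeq a = Df a := by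
  have hinf : (setOf (fun m => ∃ k r : ℕ, 1 ≤ r ∧ r < ratios a (k + 1) ∧ m = r * a k)).Infinite := by
    apply Set.infinite_of_injective_forall_mem (f := a) (a_strictMono ha).injective
    intro k
    exact ⟨k, 1, le_rfl, by have := ratios_two_le ha k; omega, (one_mul _).symm⟩
  apply strictMono_nat_range_eq (Nat.nth_strictMono hinf) (Df_strictMono ha)
  rw [Nat.range_nth_of_infinite hinf, Df_range ha]

lemma dSeq_block (ha : IsArithSeq a) {k n : ℕ} (hk : 1 ≤ k)
    (h1 : nseq a (k-1) ≤ n) (h2 : n < nseq a k) :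
    dSeq a n = (n - nseq a (k-1) + 2) * a (k-1) := by
  have hn : 1 ≤ n := by have := nseq_ge ha (k-1); omega
  rw [dSeq_eq_Df ha]
  simp only [Df, if_neg (by omega : n ≠ 0), blk_eq ha hk h1 h2]



lemma sqrt_div_tendsto_zero :
    Tendsto (fun n : ℕ => ((Nat.sqrt n : ℝ) + 1) / n) atTop (𝓝 0) := by
  have hb : Tendsto (fun n : ℕ => 3 / (Nat.sqrt n : ℝ)) atTop (𝓝 0) := by
    have hsq : Tendsto (fun n : ℕ => Nat.sqrt n) atTop atTop := by
      apply Filter.tendsto_atTop_atTop.mpr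
      intro b
      refine ⟨b ^ 2, fun n hn => ?_⟩
      calc b = Nat.sqrt (b ^ 2) := (Nat.sqrt_eq' b).symm
        _ ≤ Nat.sqrt n := Nat.sqrt_le_sqrt hn
    have h1 : Tendsto (fun k : ℕ => 3 / (k : ℝ)) atTop (𝓝 0) := by
      have := tendsto_one_div_atTop_nhds_zero_nat (𝕜 := ℝ)
      have h3 := this.const_mul (3:ℝ)
      simpa [mul_one_div, div_eq_mul_inv] using h3
    exact h1.comp hsq
  apply squeeze_zero' (g := fun n : ℕ => 3 / (Nat.sqrt n : ℝ))
  · filter_upwards [] with n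
    positivity
  · filter_upwards [eventually_ge_atTop 1] with n hn
    have hs1 : 1 ≤ Nat.sqrt n := by
      have := Nat.sqrt_le_sqrt hn
      simpa using this
    have hns : n < (Nat.sqrt n + 1) * (Nat.sqrt n + 1) := Nat.lt_succ_sqrt n
    have hcast : (n:ℝ) ≥ 1 := by exact_mod_cast hn
    have hscast : (1:ℝ) ≤ (Nat.sqrt n : ℝ) := by exact_mod_cast hs1
    rw [div_le_div_iff₀ (by linarith) (by linarith)]
    have hn2 : (n:ℝ) ≥ (Nat.sqrt n : ℝ) ^ 2 := by
      exact_mod_cast Nat.sqrt_le' n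
    nlinarith
  · exact hb

lemma ratios_eventually_ge_three (ha : IsArithSeq a) (h : StronglyNonDli a) :
    ∃ K : ℕ, ∀ k, K ≤ k → 3 ≤ ratios a (k+1) := by
  by_contra hcon
  push_neg at hcon
  have hS : {k : ℕ | 1 ≤ k ∧ ratios a k = 2}.Infinite := by
    apply Set.infinite_of_forall_exists_gt
    intro m
    obtain ⟨k, hk1, hk2⟩ := hcon (m+1)
    exact ⟨k+1, ⟨by omega, by have := ratios_two_le ha k; omega⟩, by omega⟩
  set S := {k : ℕ | 1 ≤ k ∧ ratios a k = 2} with hSdef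
  set g : ℕ → ℕ := fun m => Classical.choose (hS.exists_gt m) with hg
  have hgS : ∀ m, g m ∈ S ∧ m < g m := fun m => by
    have := Classical.choose_spec (hS.exists_gt m)
    exact ⟨this.1, this.2⟩
  set c : ℕ → ℕ := fun i => Nat.rec (g 1) (fun i prev => g (max prev ((i+2)*(i+2)))) i with hcdef
  have hcsucc : ∀ i, c (i+1) = g (max (c i) ((i+2)*(i+2))) := fun i => rfl
  have hc0 : c 0 = g 1 := rfl
  have hcS : ∀ i, c i ∈ S := by
    intro i
    cases i with
    | zero => rw [hc0]; exact (hgS 1).1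
    | succ i => rw [hcsucc]; exact (hgS _).1
  have hcmono : StrictMono c := by
    apply strictMono_nat_of_lt_succ
    intro i
    rw [hcsucc]
    calc c i ≤ max (c i) ((i+2)*(i+2)) := le_max_left _ _
      _ < g (max (c i) ((i+2)*(i+2))) := (hgS _).2
  have hcgrow : ∀ i, (i+1)*(i+1) < c i := by
    intro i
    cases i with
    | zero => rw [hc0]; simpa using (hgS 1).2
    | succ i =>
      rw [hcsucc]
      calc (i+2)*(i+2) ≤ max (c i) ((i+2)*(i+2)) := le_max_right _ _
        _ < _ := (hgS _).2
  have hAinf : (Set.range c).Infinite := Set.infinite_range_of_injective hcmono.injective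
  have hpos := h (Set.range c) hAinf
  have hzero : Tendsto (fun n : ℕ => ((liftSet a (Set.range c) ∩ Set.Iio n).ncard : ℝ) / n)
      atTop (𝓝 0) := by
    apply squeeze_zero' (g := fun n : ℕ => ((Nat.sqrt n : ℝ) + 1) / n)
    · filter_upwards [] with n; positivity
    · filter_upwards [] with n
      rcases Nat.eq_zero_or_pos n with rfl | hn
      · simp
      have hsub : liftSet a (Set.range c) ∩ Set.Iio n ⊆
          (fun i => nseq a (c i - 1)) '' (Set.Iic (Nat.sqrt n)) := by
        rintro x ⟨hxL, hxn⟩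
        simp only [liftSet, Set.mem_iUnion] at hxL
        obtain ⟨k, hkA, hxk⟩ := hxL
        obtain ⟨i, rfl⟩ := hkA
        obtain ⟨hk1, hk2⟩ := hcS i
        have hblock : nseq a (c i) = nseq a (c i - 1) + 1 := by
          obtain ⟨j, hj⟩ : ∃ j, c i = j + 1 := ⟨c i - 1, by omega⟩
          rw [hj, nseq_succ]
          rw [hj] at hk2
          simp only [show j + 1 - 1 = j by omega]
          omega
        rw [Set.mem_Icc] at hxk
        simp only [Set.mem_Iio] at hxn
        have hxeq : x = nseq a (c i - 1) := by omega
        have hile : i ≤ Nat.sqrt n := by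
          by_contra hgt
          push_neg at hgt
          have h1 : (i+1)*(i+1) < c i := hcgrow i
          have h2 : c i ≤ nseq a (c i - 1) := by
            have := nseq_ge ha (c i - 1)
            omega
          have h3 : nseq a (c i - 1) < n := by rw [← hxeq]; exact hxn

          have h4 : n < (Nat.sqrt n + 1) * (Nat.sqrt n + 1) := Nat.lt_succ_sqrt n
          have h5 : (Nat.sqrt n + 1) * (Nat.sqrt n + 1) ≤ (i+1)*(i+1) :=
            Nat.mul_le_mul (by omega) (by omega)
          omega
        exact ⟨i, hile, hxeq.symm⟩
      have hcount : (liftSet a (Set.range c) ∩ Set.Iio n).ncard ≤ Nat.sqrt n + 1 := by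
        calc (liftSet a (Set.range c) ∩ Set.Iio n).ncard
            ≤ ((fun i => nseq a (c i - 1)) '' (Set.Iic (Nat.sqrt n))).ncard :=
              Set.ncard_le_ncard hsub ((Set.finite_Iic _).image _)
          _ ≤ (Set.Iic (Nat.sqrt n)).ncard := Set.ncard_image_le (Set.finite_Iic _)
          _ = Nat.sqrt n + 1 := by
              rw [← Finset.coe_Iic, Set.ncard_coe_finset, Nat.card_Iic]
      have hnpos : (0:ℝ) < n := by exact_mod_cast hn
      rw [div_le_div_iff₀ hnpos hnpos]
      have : ((liftSet a (Set.range c) ∩ Set.Iio n).ncard : ℝ) ≤ (Nat.sqrt n : ℝ) + 1 := by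
        exact_mod_cast hcount
      nlinarith
    · exact sqrt_div_tendsto_zero
  have : upperDensity (liftSet a (Set.range c)) = 0 := hzero.limsup_eq
  rw [this] at hpos
  exact lt_irrefl 0 hpos



/-- Rigidity: if all `a k * y` are very close to integers (relative to the next ratio),
then `a K * y` is an integer. -/
lemma rigidity (ha : IsArithSeq a) {y : ℝ} {K : ℕ}
    (hy : ∀ k, K ≤ k → |(a k : ℝ) * y - round ((a k:ℝ) * y)| < 1/(2 * (ratios a (k+1) : ℝ))) :
    ∃ m : ℤ, (a K : ℝ) * y = m := by
  set s : ℕ → ℝ := fun k => (a k:ℝ)*y - round ((a k:ℝ)*y) with hs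
  have hstep : ∀ k, K ≤ k → s (k+1) = (ratios a (k+1) : ℝ) * s k := by
    intro k hk
    have hb2 : 2 ≤ ratios a (k+1) := ratios_two_le ha k
    have hbpos : (0:ℝ) < (ratios a (k+1) : ℝ) := by
      have : (2:ℝ) ≤ (ratios a (k+1) : ℝ) := by exact_mod_cast hb2
      linarith
    have h1 : (a (k+1) : ℝ) * y = (ratios a (k+1) : ℝ) * ((a k : ℝ) * y) := by
      rw [ratios_mul ha k]; push_cast; ring
    have h3 : |(ratios a (k+1):ℝ) * s k| < 1/2 := by
      rw [abs_mul, abs_of_nonneg hbpos.le]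
      have := hy k hk
      calc (ratios a (k+1):ℝ) * |s k| < (ratios a (k+1):ℝ) * (1/(2 * (ratios a (k+1):ℝ))) :=
            by apply mul_lt_mul_of_pos_left this hbpos
        _ = 1/2 := by field_simp
    have h4 : round ((a (k+1):ℝ)*y) = ratios a (k+1) * round ((a k:ℝ)*y) := by
      have h2 : (a (k+1):ℝ) * y
          = ((ratios a (k+1) * round ((a k:ℝ)*y) : ℤ):ℝ) + (ratios a (k+1):ℝ) * s k := by
        rw [h1, hs]; push_cast; ring
      have h5 : round ((ratios a (k+1):ℝ) * s k) = 0 := by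
        apply round_eq_zero_iff.mpr
        obtain ⟨hl, hr⟩ := abs_lt.mp h3
        exact ⟨by linarith, by linarith⟩
      rw [h2, round_intCast_add, h5, add_zero]
    show (a (k+1):ℝ)*y - round ((a (k+1):ℝ)*y) = (ratios a (k+1) : ℝ) * s k
    rw [h4, h1, hs]; push_cast; ring
  have hgrow : ∀ j : ℕ, 2^j * |s K| ≤ |s (K + j)| := by
    intro j
    induction j with
    | zero => simp
    | succ j ih =>
      have hb2 : 2 ≤ ratios a (K+j+1) := ratios_two_le ha (K+j)
      have hb2R : (2:ℝ) ≤ (ratios a (K+j+1) : ℝ) := by exact_mod_cast hb2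
      have heq : s (K + (j+1)) = (ratios a (K+j+1) : ℝ) * s (K + j) := by
        have := hstep (K+j) (by omega)
        convert this using 2 <;> omega
      rw [heq, abs_mul, abs_of_nonneg (by linarith : (0:ℝ) ≤ (ratios a (K+j+1):ℝ))]
      calc 2^(j+1) * |s K| = 2 * (2^j * |s K|) := by ring
        _ ≤ 2 * |s (K+j)| := by linarith
        _ ≤ (ratios a (K+j+1):ℝ) * |s (K+j)| := by
            apply mul_le_mul_of_nonneg_right hb2R (abs_nonneg _)
  have hzero : s K = 0 := by
    by_contra h0
    have hpos : 0 < |s K| := abs_pos.2 h0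
    obtain ⟨j, hj⟩ := pow_unbounded_of_one_lt ((1/2)/|s K|) (by norm_num : (1:ℝ) < 2)
    have h1 := hgrow j
    have h2 : |s (K + j)| ≤ 1/2 := abs_sub_round _
    rw [div_lt_iff₀ hpos] at hj
    linarith
  refine ⟨round ((a K:ℝ)*y), ?_⟩
  have : (a K:ℝ)*y - round ((a K:ℝ)*y) = 0 := hzero
  linarith

lemma torsion_countable :
    {x : AddCircle (1:ℝ) | ∃ m : ℤ, m ≠ 0 ∧ m • x = 0}.Countable := by
  apply Set.Countable.mono
    (s₂ := Set.range (fun q : ℚ => ((q:ℝ) : AddCircle (1:ℝ))))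
  · rintro x ⟨m, hm, hmx⟩
    obtain ⟨y, rfl⟩ : ∃ y : ℝ, (y : AddCircle (1:ℝ)) = x := by
      induction x using QuotientAddGroup.induction_on with
      | H y => exact ⟨y, rfl⟩
    have h1 : ((m • y : ℝ) : AddCircle (1:ℝ)) = 0 := by
      rw [AddCircle.coe_zsmul]; exact hmx
    rw [AddCircle.coe_eq_zero_iff] at h1
    obtain ⟨n, hn⟩ := h1
    refine ⟨(n/m : ℚ), ?_⟩
    have hy : y = (n:ℝ)/(m:ℝ) := by
      have h2 : (n:ℝ) = (m:ℝ) * y := by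
        rw [zsmul_eq_mul, zsmul_eq_mul, mul_one] at hn
        exact_mod_cast hn
      have hm0 : (m:ℝ) ≠ 0 := by exact_mod_cast hm
      field_simp at h2 ⊢
      linarith
    simp only
    congr 1
    rw [hy]
    push_cast
    ring
  · exact Set.countable_range _


/-- a heavy block: if `a (k-1) * y` is far from integers (relative to `1/(2 b_k)`),
then a 1/20-fraction of the block `[n_{k-1}, n_k - 1]` is `1/40`-bad. -/
lemma heavy_block (ha : IsArithSeq a) {y : ℝ} {k : ℕ} (hk : 1 ≤ k)
    (hb3 : 3 ≤ ratios a k)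
    (hδ : 1/(2*(ratios a k : ℝ)) ≤ |(a (k-1):ℝ)*y - round ((a (k-1):ℝ)*y)|) :
    ((ratios a k : ℝ) - 1)/20 ≤
      (((Finset.Icc (nseq a (k-1)) (nseq a k - 1)).filter
        (fun n => (1/40:ℝ) ≤ |(dSeq a n : ℝ)*y - round ((dSeq a n:ℝ)*y)|)).card : ℝ) := by
  classical
  obtain ⟨j, rfl⟩ : ∃ j, k = j + 1 := ⟨k - 1, by omega⟩
  simp only [show j + 1 - 1 = j by omega] at hδ ⊢
  set b := ratios a (j+1) with hbdef
  set t := (a j : ℝ) * y with htdef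
  have hcount := badCount b hb3 t hδ
  set R := (Finset.Icc 2 b).filter
      (fun r : ℕ => (1/40:ℝ) ≤ |(r:ℝ)*t - round ((r:ℝ)*t)|) with hR
  set φ : ℕ → ℕ := fun r => nseq a j + (r - 2) with hφ
  have hval : ∀ r ∈ R, dSeq a (φ r) = r * a j := by
    intro r hr
    rw [hR, Finset.mem_filter, Finset.mem_Icc] at hr
    obtain ⟨⟨hr2, hrb⟩, _⟩ := hr
    have hblock : dSeq a (φ r) = (φ r - nseq a ((j+1)-1) + 2) * a ((j+1)-1) := by
      apply dSeq_block ha (by omega)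
      · simp only [show j + 1 - 1 = j by omega, hφ]; omega
      · rw [nseq_succ]
        simp only [hφ]
        omega
    rw [hblock]
    simp only [show j + 1 - 1 = j by omega, hφ]
    congr 1
    omega
  have hmaps : ∀ r ∈ R, φ r ∈ (Finset.Icc (nseq a j) (nseq a (j+1) - 1)).filter
      (fun n => (1/40:ℝ) ≤ |(dSeq a n : ℝ)*y - round ((dSeq a n:ℝ)*y)|) := by
    intro r hr
    have hv := hval r hr
    rw [hR, Finset.mem_filter, Finset.mem_Icc] at hr
    obtain ⟨⟨hr2, hrb⟩, hrbad⟩ := hr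
    rw [Finset.mem_filter, Finset.mem_Icc]
    refine ⟨⟨by simp [hφ], ?_⟩, ?_⟩
    · rw [nseq_succ]
      simp only [hφ]
      have := ratios_two_le ha j
      omega
    · rw [hv]
      have : ((r * a j : ℕ) : ℝ) * y = (r:ℝ) * t := by push_cast [htdef]; ring
      rw [this]
      exact hrbad
  have hinj : Set.InjOn φ R := by
    intro r hr r' hr' hrr
    simp only [hR, Finset.coe_filter, Set.mem_setOf_eq, Finset.mem_Icc] at hr hr'
    simp only [hφ] at hrr
    omega
  calc ((b:ℝ) - 1)/20 ≤ (R.card : ℝ) := hcount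
    _ ≤ _ := by
        exact_mod_cast Nat.cast_le.mpr (Finset.card_le_card_of_injOn φ hmaps hinj)

/-- The density endgame. -/
lemma density_contradiction (ha : IsArithSeq a) (A : Set ℕ) (hA1 : ∀ k ∈ A, 1 ≤ k)
    (B : Set ℕ)
    (hheavy : ∀ k ∈ A, ((ratios a k : ℝ) - 1)/20 ≤
       ((B ∩ Set.Icc (nseq a (k-1)) (nseq a k - 1)).ncard : ℝ))
    (hU : 0 < upperDensity (liftSet a A))
    (hB : HasDensity B 0) : False := by
  classical
  set U := upperDensity (liftSet a A) with hUdef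
  set θ : ℝ := min (U/2) (1/2) with hθdef
  have hθpos : 0 < θ := lt_min (by linarith) (by norm_num)
  have hθU : θ < U := by
    rcases le_total (U/2) (1/2) with h | h
    · rw [hθdef, min_eq_left h]; linarith
    · rw [hθdef, min_eq_right h]; linarith
  have hθ1 : θ ≤ 1 := by
    rw [hθdef]
    calc min (U/2) (1/2) ≤ 1/2 := min_le_right _ _
      _ ≤ 1 := by norm_num
  have hfreq : ∃ᶠ n in atTop, θ <
      ((liftSet a A ∩ Set.Iio n).ncard : ℝ) / n := by
    apply frequently_lt_of_lt_limsup
    · apply Filter.IsBoundedUnder.isCoboundedUnder_le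
      refine ⟨0, ?_⟩
      rw [Filter.eventually_map]
      filter_upwards [] with n
      positivity
    · exact hθU
  have hev : ∀ᶠ n in atTop,
      ((B ∩ Set.Iio n).ncard : ℝ) / n < θ/40 :=
    hB.eventually_lt_const (by linarith)
  rw [Filter.eventually_atTop] at hev
  obtain ⟨N0, hN0⟩ := hev
  rw [Filter.frequently_atTop] at hfreq
  obtain ⟨n, hnN, hnθ⟩ := hfreq (max N0 1)
  have hn1 : 1 ≤ n := le_trans (le_max_right N0 1) hnN
  have hnN0 : N0 ≤ n := le_trans (le_max_left N0 1) hnN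
  have hnR : (1:ℝ) ≤ n := by exact_mod_cast hn1
  have hcLn : θ * n < ((liftSet a A ∩ Set.Iio n).ncard : ℝ) := by
    rw [lt_div_iff₀ (by linarith : (0:ℝ) < n)] at hnθ
    exact hnθ
  set F := (Finset.Icc 1 n).filter (fun k => k ∈ A ∧ nseq a (k-1) < n) with hF
  have hFA : ∀ k ∈ F, k ∈ A ∧ 1 ≤ k ∧ nseq a (k-1) < n := by
    intro k hk
    simp only [hF, Finset.mem_filter, Finset.mem_Icc] at hk
    exact ⟨hk.2.1, hk.1.1, hk.2.2⟩
  -- 1. lift ∩ [0,n) is covered by the blocks of F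
  have hcover : liftSet a A ∩ Set.Iio n ⊆
      ↑(F.biUnion (fun k => Finset.Icc (nseq a (k-1)) (nseq a k - 1))) := by
    rintro x ⟨hxL, hxn⟩
    simp only [Set.mem_Iio] at hxn
    simp only [liftSet, Set.mem_iUnion] at hxL
    obtain ⟨k, hkA, hxk⟩ := hxL
    rw [Set.mem_Icc] at hxk
    have hk1 : 1 ≤ k := hA1 k hkA
    have hkn : nseq a (k-1) < n := by omega
    have hkle : k ≤ n := by
      have := nseq_ge ha (k-1)
      omega
    rw [Finset.mem_coe, Finset.mem_biUnion]
    refine ⟨k, ?_, ?_⟩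
    · simp only [hF, Finset.mem_filter, Finset.mem_Icc]
      exact ⟨⟨hk1, hkle⟩, hkA, hkn⟩
    · rw [Finset.mem_Icc]; exact hxk
  -- 2. block lengths
  have hlen : ∀ k ∈ F, (Finset.Icc (nseq a (k-1)) (nseq a k - 1)).card = ratios a k - 1 := by
    intro k hk
    obtain ⟨_, hk1, _⟩ := hFA k hk
    obtain ⟨j, rfl⟩ : ∃ j, k = j + 1 := ⟨k-1, by omega⟩
    rw [Nat.card_Icc, nseq_succ]
    have h2 := ratios_two_le ha j
    have h3 := nseq_ge ha j
    simp only [show j+1-1 = j by omega]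
    omega
  have hcastlen : ∀ k ∈ F, ((ratios a k - 1 : ℕ) : ℝ) = (ratios a k : ℝ) - 1 := by
    intro k hk
    obtain ⟨_, hk1, _⟩ := hFA k hk
    obtain ⟨j, rfl⟩ : ∃ j, k = j + 1 := ⟨k-1, by omega⟩
    have h2 := ratios_two_le ha j
    rw [Nat.cast_sub (by omega : 1 ≤ ratios a (j+1))]
    norm_num
  set Sg := ∑ k ∈ F, ((ratios a k : ℝ) - 1) with hSg
  have hSgnonneg : ∀ k ∈ F, 0 ≤ (ratios a k : ℝ) - 1 := by
    intro k hk
    obtain ⟨_, hk1, _⟩ := hFA k hk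
    obtain ⟨j, rfl⟩ : ∃ j, k = j + 1 := ⟨k-1, by omega⟩
    have h2 := ratios_two_le ha j
    have : (2:ℝ) ≤ (ratios a (j+1) : ℝ) := by exact_mod_cast h2
    linarith
  have hcL : ((liftSet a A ∩ Set.Iio n).ncard : ℝ) ≤ Sg := by
    have h1 : (liftSet a A ∩ Set.Iio n).ncard ≤
        (F.biUnion (fun k => Finset.Icc (nseq a (k-1)) (nseq a k - 1))).card := by
      rw [← Set.ncard_coe_finset]
      exact Set.ncard_le_ncard hcover (Finset.finite_toSet _)
    have h2 := Finset.card_biUnion_le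
      (s := F) (t := fun k => Finset.Icc (nseq a (k-1)) (nseq a k - 1))
    have h3 : ((∑ k ∈ F, (Finset.Icc (nseq a (k-1)) (nseq a k - 1)).card : ℕ) : ℝ) = Sg := by
      rw [Nat.cast_sum, hSg]
      apply Finset.sum_congr rfl
      intro k hk
      rw [hlen k hk, hcastlen k hk]
    calc ((liftSet a A ∩ Set.Iio n).ncard : ℝ)
        ≤ ((F.biUnion (fun k => Finset.Icc (nseq a (k-1)) (nseq a k - 1))).card : ℝ) := by
          exact_mod_cast h1
      _ ≤ ((∑ k ∈ F, (Finset.Icc (nseq a (k-1)) (nseq a k - 1)).card : ℕ) : ℝ) := by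
          exact_mod_cast h2
      _ = Sg := h3
  -- 3. the point m
  set m := max n (F.sup (nseq a)) with hm
  have hm_n : n ≤ m := le_max_left _ _
  -- 4. bad elements: blocks are disjoint和 counted in B ∩ [0, m)
  have hdisjoint : ∀ k ∈ F, ∀ k' ∈ F, k ≠ k' →
      Disjoint ((Finset.Icc (nseq a (k-1)) (nseq a k - 1)).filter (· ∈ B))
        ((Finset.Icc (nseq a (k'-1)) (nseq a k' - 1)).filter (· ∈ B)) := by
    intro k hk k' hk' hne
    obtain ⟨_, hk1, _⟩ := hFA k hk
    obtain ⟨_, hk1', _⟩ := hFA k' hk'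
    rw [Finset.disjoint_left]
    intro j hj hj'
    rw [Finset.mem_filter, Finset.mem_Icc] at hj hj'
    rcases Nat.lt_or_ge k k' with hlt | hge
    · have h1 : nseq a k ≤ nseq a (k'-1) := (nseq_strictMono ha).monotone (by omega)
      have h2 := nseq_ge ha k
      omega
    · have hlt : k' < k := by omega
      have h1 : nseq a k' ≤ nseq a (k-1) := (nseq_strictMono ha).monotone (by omega)
      have h2 := nseq_ge ha k'
      omega
  set cB := ((Finset.range m).filter (· ∈ B)).card with hcB
  have hsum_le : ∑ k ∈ F, ((Finset.Icc (nseq a (k-1)) (nseq a k - 1)).filter (· ∈ B)).card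
      ≤ cB := by
    rw [← Finset.card_biUnion hdisjoint]
    apply Finset.card_le_card
    intro j hj
    rw [Finset.mem_biUnion] at hj
    obtain ⟨k, hkF, hjk⟩ := hj
    rw [Finset.mem_filter, Finset.mem_Icc] at hjk
    rw [Finset.mem_filter, Finset.mem_range]
    refine ⟨?_, hjk.2⟩
    have h1 : nseq a k ≤ F.sup (nseq a) := Finset.le_sup hkF
    have h2 : F.sup (nseq a) ≤ m := le_max_right _ _
    have h3 := nseq_ge ha k
    omega
  have hsumR : Sg/20 ≤ (cB : ℝ) := by
    have hconv : ∀ k ∈ F, ((ratios a k : ℝ) - 1)/20 ≤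
        (((Finset.Icc (nseq a (k-1)) (nseq a k - 1)).filter (· ∈ B)).card : ℝ) := by
      intro k hk
      obtain ⟨hkA, _, _⟩ := hFA k hk
      have := hheavy k hkA
      have heq : (B ∩ Set.Icc (nseq a (k-1)) (nseq a k - 1)).ncard
          = ((Finset.Icc (nseq a (k-1)) (nseq a k - 1)).filter (· ∈ B)).card := by
        rw [← Set.ncard_coe_finset]
        congr 1
        ext j
        simp only [Finset.coe_filter, Set.mem_setOf_eq, Finset.mem_Icc, Set.mem_inter_iff,
          Set.mem_Icc]
        tauto
      rw [heq] at this
      exact this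
    calc Sg/20 = ∑ k ∈ F, ((ratios a k : ℝ) - 1)/20 := by rw [hSg, Finset.sum_div]
      _ ≤ ∑ k ∈ F, (((Finset.Icc (nseq a (k-1)) (nseq a k - 1)).filter (· ∈ B)).card : ℝ) :=
          Finset.sum_le_sum hconv
      _ = ((∑ k ∈ F, ((Finset.Icc (nseq a (k-1)) (nseq a k - 1)).filter (· ∈ B)).card : ℕ) : ℝ) := by
          rw [Nat.cast_sum]
      _ ≤ (cB : ℝ) := by exact_mod_cast hsum_le
  -- 5. Sg ≥ θ m / 2
  have hmR : (n:ℝ) ≤ (m:ℝ) := by exact_mod_cast hm_n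
  have hSgm : θ * m / 2 ≤ Sg := by
    rcases le_or_gt (F.sup (nseq a)) n with hsup | hsup
    · have hmn : m = n := max_eq_left hsup
      have : (m:ℝ) = (n:ℝ) := by rw [hmn]
      rw [this]
      nlinarith
    · have hmn : m = F.sup (nseq a) := max_eq_right hsup.le
      have hFne : F.Nonempty := by
        by_contra hemp
        rw [Finset.not_nonempty_iff_eq_empty] at hemp
        rw [hemp] at hsup
        simp only [Finset.sup_empty, Nat.bot_eq_zero] at hsup
        omega
      obtain ⟨k0, hk0F, hk0⟩ := Finset.exists_mem_eq_sup F hFne (nseq a)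
      obtain ⟨_, hk01, hk0n⟩ := hFA k0 hk0F
      have hterm : (m:ℝ) - n ≤ (ratios a k0 : ℝ) - 1 := by
        obtain ⟨j, hj⟩ : ∃ j, k0 = j + 1 := ⟨k0-1, by omega⟩
        have hnat : m + 1 ≤ n + ratios a k0 := by
          rw [hmn, hk0, hj, nseq_succ]
          rw [hj] at hk0n
          simp only [show j+1-1 = j by omega] at hk0n
          have := ratios_two_le ha j
          omega
        have : ((m:ℝ)) + 1 ≤ (n:ℝ) + (ratios a k0 : ℝ) := by exact_mod_cast hnat
        linarith
      have hsingle : (ratios a k0 : ℝ) - 1 ≤ Sg :=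
        Finset.single_le_sum hSgnonneg hk0F
      have h1 : θ * n ≤ Sg := le_of_lt (lt_of_lt_of_le hcLn hcL)
      nlinarith
  -- 6. contradiction
  have hfinal : θ/40 * m ≤ (cB:ℝ) := by linarith
  have hmN0 : N0 ≤ m := le_trans hnN0 hm_n
  have hBm := hN0 m hmN0
  have hBeq : (B ∩ Set.Iio m).ncard = cB := by
    rw [hcB, ← Set.ncard_coe_finset]
    congr 1
    ext j
    simp only [Finset.coe_filter, Set.mem_setOf_eq, Finset.mem_range, Set.mem_inter_iff,
      Set.mem_Iio]
    tauto
  rw [hBeq] at hBm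
  have hmpos : (0:ℝ) < m := by linarith
  rw [div_lt_iff₀ hmpos] at hBm
  linarith


end Arith

/-- if `(a n)` is strongly non dli then `t^s_{(d n)}(𝕋)` is countable. -/
theorem statChar_countable_of_stronglyNonDli (a : ℕ → ℕ) (ha : IsArithSeq a)
    (h : StronglyNonDli a) :
    (statChar (fun n => (dSeq a n : ℤ))).Countable := by
  classical
  apply Set.Countable.mono
    (s₂ := {x : AddCircle (1:ℝ) | ∃ m : ℤ, m ≠ 0 ∧ m • x = 0})
  swap
  · exact torsion_countable
  intro x hx
  by_contra hxt
  simp only [Set.mem_setOf_eq, not_exists, not_and] at hxt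
  obtain ⟨y, rfl⟩ : ∃ y : ℝ, (y : AddCircle (1:ℝ)) = x := by
    induction x using QuotientAddGroup.induction_on with
    | H y => exact ⟨y, rfl⟩
  obtain ⟨K0, hK0⟩ := ratios_eventually_ge_three ha h
  have hnorm : ∀ d : ℕ, ‖((d:ℤ)) • ((y:ℝ) : AddCircle (1:ℝ))‖
      = |(d:ℝ)*y - round ((d:ℝ)*y)| := by
    intro d
    have h1 : ((d:ℤ)) • ((y:ℝ) : AddCircle (1:ℝ))
        = ((((d:ℤ) • y : ℝ)) : AddCircle (1:ℝ)) := (AddCircle.coe_zsmul (1:ℝ)).symm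
    rw [h1, AddCircle.norm_eq]
    have h2 : ((d:ℤ) • y : ℝ) = (d:ℝ) * y := by push_cast [zsmul_eq_mul]; ring
    rw [h2]
    norm_num
  have hnt : ∀ K : ℕ, ∃ k, K ≤ k ∧
      1/(2*(ratios a (k+1):ℝ)) ≤ |(a k:ℝ)*y - round ((a k:ℝ)*y)| := by
    intro K
    by_contra hno
    push_neg at hno
    obtain ⟨mm, hmm⟩ := rigidity ha (fun k hk => hno k hk)
    refine hxt (a K : ℤ) (by have := a_pos ha K; omega) ?_
    have hc : (((a K : ℤ) • y : ℝ) : AddCircle (1:ℝ)) = 0 := by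
      rw [AddCircle.coe_eq_zero_iff]
      refine ⟨mm, ?_⟩
      rw [zsmul_eq_mul, mul_one, zsmul_eq_mul, ← hmm]
      push_cast
      ring
    rw [← AddCircle.coe_zsmul] at *
    exact hc
  set A := {k : ℕ | K0 + 1 ≤ k ∧
      1/(2*(ratios a k:ℝ)) ≤ |(a (k-1):ℝ)*y - round ((a (k-1):ℝ)*y)|} with hA
  have hAinf : A.Infinite := by
    apply Set.infinite_of_forall_exists_gt
    intro N
    obtain ⟨k, hk1, hk2⟩ := hnt (max N K0 + 1)
    refine ⟨k+1, ⟨by omega, ?_⟩, by omega⟩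
    simpa [show k+1-1 = k by omega] using hk2
  set B := {n : ℕ | (1/40:ℝ) ≤ ‖((dSeq a n:ℤ)) • ((y:ℝ) : AddCircle (1:ℝ))‖} with hBdef
  have hBd : HasDensity B 0 := hx (1/40) (by norm_num)
  have hheavy : ∀ k ∈ A, ((ratios a k : ℝ) - 1)/20 ≤
      ((B ∩ Set.Icc (nseq a (k-1)) (nseq a k - 1)).ncard : ℝ) := by
    intro k hkA
    rw [hA, Set.mem_setOf_eq] at hkA
    obtain ⟨hkK, hkδ⟩ := hkA
    have hb3 : 3 ≤ ratios a k := by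
      obtain ⟨j, rfl⟩ : ∃ j, k = j+1 := ⟨k-1, by omega⟩
      exact hK0 j (by omega)
    have hcard := heavy_block ha (by omega) hb3 hkδ
    have heq : (B ∩ Set.Icc (nseq a (k-1)) (nseq a k - 1)).ncard
        = ((Finset.Icc (nseq a (k-1)) (nseq a k - 1)).filter
            (fun n => (1/40:ℝ) ≤ |(dSeq a n : ℝ)*y - round ((dSeq a n:ℝ)*y)|)).card := by
      rw [← Set.ncard_coe_finset]
      congr 1
      ext j
      simp only [Finset.coe_filter, Set.mem_setOf_eq, Finset.mem_Icc, Set.mem_inter_iff,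
        Set.mem_Icc, hBdef, hnorm]
      tauto
    rw [heq]
    exact hcard
  exact density_contradiction ha A (fun k hk => by
      rw [hA, Set.mem_setOf_eq] at hk; omega) B hheavy (h A hAinf) hBd
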